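/- Let b₀ > 0. For every ε with 0 < ε < 1 and every positive integer N₀, there exists an integer N ≥ N₀ such that |cos(2b₀·log N) - 1| ≤ ε and |sin(2b₀·log N)| ≤ ε. -/

import Mathlib

open Real

theorem cos_close_to_one_along_log (b₀ : ℝ) (hb : 0 < b₀) :
    ∀ ε : ℝ, 0 < ε → ε < 1 → ∀ N₀ : ℕ, 0 < N₀ →
      ∃ N : ℕ, N₀ ≤ N ∧ |Real.cos (2 * b₀ * Real.log N) - 1| ≤ ε ∧
        |Real.sin (2 * b₀ * Real.log N)| ≤ ε := by
  intro ε hε hε1 N₀ hN₀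
  set M : ℝ := max (N₀ : ℝ) (2 * b₀ / ε) with hM
  have hMpos : 0 < M := lt_of_lt_of_le (by exact_mod_cast hN₀) (le_max_left _ _)
  obtain ⟨k, hk⟩ := exists_nat_ge (b₀ * Real.log M / π)
  set x : ℝ := Real.exp (π * k / b₀) with hx
  have hxpos : 0 < x := Real.exp_pos _
  have hxM : M ≤ x := by
    rw [hx, ← Real.exp_log hMpos]
    apply Real.exp_le_exp.2
    rw [div_le_iff₀ Real.pi_pos] at hk
    rw [le_div_iff₀ hb]
    nlinarith [Real.pi_pos]
  set N : ℕ := ⌈x⌉₊ with hN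
  have hNx : x ≤ N := Nat.le_ceil x
  have hNx1 : (N : ℝ) < x + 1 := Nat.ceil_lt_add_one hxpos.le
  have hNpos : 0 < (N : ℝ) := lt_of_lt_of_le hxpos hNx
  refine ⟨N, ?_, ?_⟩
  · have : (N₀ : ℝ) ≤ N := le_trans ((le_max_left _ _).trans hxM) hNx
    exact_mod_cast this
  -- the key error bound
  have hlog : Real.log N - Real.log x ≤ 1 / x := by
    have h1 : Real.log N ≤ Real.log (x + 1) :=
      Real.log_le_log (by positivity) hNx1.le
    have h2 : Real.log (x + 1) - Real.log x ≤ 1 / x := by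
      rw [← Real.log_div (by positivity) (ne_of_gt hxpos)]
      have := Real.log_le_sub_one_of_pos (show 0 < (x + 1) / x by positivity)
      calc Real.log ((x+1)/x) ≤ (x+1)/x - 1 := this
        _ = 1 / x := by field_simp; ring
    linarith
  have hlog0 : 0 ≤ Real.log N - Real.log x := by
    have := Real.log_le_log hxpos hNx
    linarith
  set t : ℝ := 2 * b₀ * Real.log N - k * (2 * π) with ht
  have hlogx : Real.log x = π * k / b₀ := Real.log_exp _
  have htval : t = 2 * b₀ * (Real.log N - Real.log x) := by
    rw [ht, hlogx]; field_simp
  have hxe : 2 * b₀ / ε ≤ x := (le_max_right _ _).trans hxM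
  have htle : t ≤ ε := by
    rw [htval]
    have h1 : 2 * b₀ * (Real.log N - Real.log x) ≤ 2 * b₀ * (1 / x) := by
      apply mul_le_mul_of_nonneg_left hlog; positivity
    have h2 : 2 * b₀ * (1 / x) ≤ ε := by
      rw [div_le_iff₀ hε] at hxe
      rw [mul_one_div, div_le_iff₀ hxpos]
      linarith
    linarith
  have ht0 : 0 ≤ t := by rw [htval]; positivity
  have habs : |t| ≤ ε := abs_le.2 ⟨by linarith, htle⟩
  have hrw : 2 * b₀ * Real.log N = t + k * (2 * π) := by ring
  rw [hrw, Real.sin_add_nat_mul_two_pi, Real.cos_add_nat_mul_two_pi]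
  constructor
  · have h1 : 1 - t ^ 2 / 2 ≤ Real.cos t := Real.one_sub_sq_div_two_le_cos
    have h2 : Real.cos t ≤ 1 := Real.cos_le_one t
    have h3 : t ^ 2 ≤ ε ^ 2 := by nlinarith [ht0, htle]
    have h4 : ε ^ 2 ≤ ε := by nlinarith [hε, hε1]
    rw [abs_le]
    refine ⟨?_, by linarith⟩
    nlinarith [h1, h3, h4, hε.le]
  · calc |Real.sin t| ≤ |t| := Real.abs_sin_le_abs
      _ ≤ ε := habs
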